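/- arXiv:0910.1491 — 2 statements merged into one kernel-verified Lean document; each statement's English description precedes it below -/
import Mathlib

section
/- Let G be a group with a normal subgroup H such that H is residually finite and G/H is finite. Then G is residually finite. -/
/-- If `H` is a normal subgroup of `G`, `H` is residually finite and `G/H` is finite,
then `G` is residually finite. -/
theorem stmt_5 (G : Type*) [Group G] (H : Subgroup G) (hnorm : H.Normal)
    (hres : ∀ h : H, h ≠ 1 → ∃ (Q : Type) (_ : Group Q) (_ : Finite Q) (φ : H →* Q), φ h ≠ 1)
    (hfin : Finite (G ⧸ H)) :
    ∀ g : G, g ≠ 1 → ∃ (Q : Type) (_ : Group Q) (_ : Finite Q) (φ : G →* Q), φ g ≠ 1 := by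
  intro g hg
  by_cases hgH : g ∈ H
  · obtain ⟨Q, _, _, φ, hφ⟩ := hres ⟨g, hgH⟩ (by simpa [Subtype.ext_iff] using hg)
    -- K : kernel of φ pushed to G
    set K : Subgroup G := φ.ker.map H.subtype with hK
    have hKH : K ≤ H := by
      rintro x ⟨y, _, rfl⟩; exact y.2
    have hHfi : H.FiniteIndex := H.finiteIndex_of_finite_quotient
    have hKfi : K.FiniteIndex := by
      constructor
      have : (K.relIndex H) * H.index = K.index := Subgroup.relIndex_mul_index hKH
      rw [← this]
      apply mul_ne_zero _ hHfi.index_ne_zero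
      have : K.subgroupOf H = φ.ker := by
        ext x
        simp only [Subgroup.mem_subgroupOf, hK, Subgroup.mem_map, Subgroup.coe_subtype]
        constructor
        · rintro ⟨y, hy, hyx⟩; rwa [show y = x from Subtype.ext hyx] at hy
        · intro hx; exact ⟨x, hx, rfl⟩
      rw [Subgroup.relIndex, this]
      haveI : Finite (H ⧸ φ.ker) := by
        have : Finite φ.range := Set.toFinite _
        exact Finite.of_equiv _ (QuotientGroup.quotientKerEquivRange φ).symm.toEquiv
      exact (φ.ker.finiteIndex_of_finite_quotient).index_ne_zero
    haveI := hKfi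
    refine ⟨Shrink.{0} (G ⧸ K.normalCore), inferInstance, inferInstance,
      (Shrink.mulEquiv.symm : (G ⧸ K.normalCore) ≃* _).toMonoidHom.comp (QuotientGroup.mk' _), ?_⟩
    intro hcontra
    rw [MonoidHom.comp_apply] at hcontra
    replace hcontra : (QuotientGroup.mk' K.normalCore) g = 1 := by
      simpa using congrArg (Shrink.mulEquiv : Shrink.{0} (G ⧸ K.normalCore) ≃* _) hcontra
    rw [QuotientGroup.mk'_apply, QuotientGroup.eq_one_iff] at hcontra
    have hgK : g ∈ K := K.normalCore_le hcontra
    obtain ⟨y, hy, hyg⟩ := hgK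
    apply hφ
    have : y = ⟨g, hgH⟩ := Subtype.ext hyg
    rwa [← this]
  · refine ⟨Shrink.{0} (G ⧸ H), inferInstance, inferInstance,
      (Shrink.mulEquiv.symm : (G ⧸ H) ≃* _).toMonoidHom.comp (QuotientGroup.mk' H), ?_⟩
    intro hcontra
    rw [MonoidHom.comp_apply] at hcontra
    replace hcontra : (QuotientGroup.mk' H) g = 1 := by
      simpa using congrArg (Shrink.mulEquiv : Shrink.{0} (G ⧸ H) ≃* _) hcontra
    rw [QuotientGroup.mk'_apply, QuotientGroup.eq_one_iff] at hcontra
    exact hgH hcontra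
end

section
/- By Jordan's theorem, for each n there is a constant f(n) such that every finite subgroup of GL(n,ℂ) has a normal abelian subgroup of index at most f(n). -/
open scoped Matrix.Norms.L2Operator Matrix ComplexOrder
open Real
open scoped commutatorElement MatrixOrder

namespace JordanProof

variable {n : ℕ}

local notation "Mat" => Matrix (Fin n) (Fin n) ℂ

lemma norm_one_le : ‖(1 : Mat)‖ ≤ 1 := by
  have h : ‖(1 : Mat)‖ * ‖(1 : Mat)‖ = ‖(1 : Mat)‖ := by
    simpa using (CStarRing.norm_star_mul_self (x := (1 : Mat))).symm
  nlinarith [norm_nonneg (1 : Mat)]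

lemma norm_unitary_le {u : Mat} (hu : u ∈ unitary Mat) : ‖u‖ ≤ 1 := by
  have h : ‖u‖ * ‖u‖ = ‖(1 : Mat)‖ := by
    simpa [Unitary.mem_iff.mp hu |>.1] using (CStarRing.norm_star_mul_self (x := u)).symm
  nlinarith [norm_nonneg u, norm_one_le (n := n)]

lemma norm_unitary_sub_one_le {u : Mat} (hu : u ∈ unitary Mat) : ‖u - 1‖ ≤ 2 := by
  calc ‖u - 1‖ ≤ ‖u‖ + ‖(1:Mat)‖ := norm_sub_le _ _
  _ ≤ 2 := by linarith [norm_unitary_le hu, norm_one_le (n := n)]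

lemma theta_lemma {θ : ℝ} (h0 : 0 < θ) (hpi : θ ≤ π) :
    ∃ i : ℕ, 2 * π / 3 ≤ i * θ ∧ i * θ ≤ 4 * π / 3 := by
  have hπ := Real.pi_pos
  by_cases hle : θ ≤ 2 * π / 3
  · refine ⟨⌈(2 * π / 3) / θ⌉₊, ?_, ?_⟩
    · rw [← div_le_iff₀ h0]
      exact Nat.le_ceil _
    · have h1 : (⌈(2 * π / 3) / θ⌉₊ : ℝ) < (2 * π / 3) / θ + 1 :=
        Nat.ceil_lt_add_one (by positivity)
      have := (mul_lt_mul_of_pos_right h1 h0)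
      rw [add_mul, div_mul_cancel₀ _ h0.ne'] at this
      linarith
  · exact ⟨1, by push_cast; constructor <;> nlinarith⟩

lemma cos_le_neg_half {x : ℝ} (h1 : 2 * π / 3 ≤ x) (h2 : x ≤ 4 * π / 3) :
    Real.cos x ≤ -(1/2) := by
  have hπ := Real.pi_pos
  have h : Real.cos x = - Real.cos (π - x) := by rw [Real.cos_pi_sub]; ring
  rw [h]
  have habs : |π - x| ≤ π / 3 := by rw [abs_le]; constructor <;> linarith
  have : Real.cos (π/3) ≤ Real.cos |π - x| :=
    Real.cos_le_cos_of_nonneg_of_le_pi (abs_nonneg _) (by linarith) habs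
  rw [Real.cos_abs, Real.cos_pi_div_three] at this
  linarith

lemma abs_sub_one_ge {z : ℂ} (hz : ‖z‖ = 1) (hre : z.re ≤ -(1/2)) :
    Real.sqrt 3 ≤ ‖z - 1‖ := by
  have h2 : Complex.normSq z = 1 := by
    rw [← Complex.sq_norm, hz]; norm_num
  have h3 : Complex.normSq (z - 1) = 2 - 2 * z.re := by
    simp [Complex.normSq_apply] at h2 ⊢
    nlinarith
  rw [Complex.norm_def, h3]
  exact Real.sqrt_le_sqrt (by linarith)

lemma eigen_norm_le {M : Mat} {μ : ℂ} {v : Fin n → ℂ} (hv : v ≠ 0) (h : M *ᵥ v = μ • v) :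
    ‖μ‖ ≤ ‖M‖ := by
  classical
  set x : EuclideanSpace ℂ (Fin n) := (WithLp.equiv 2 (Fin n → ℂ)).symm v with hxdef
  have hx : ‖x‖ ≠ 0 := by
    simp only [hxdef, ne_eq, norm_eq_zero, EmbeddingLike.map_eq_zero_iff]
    simpa [WithLp.equiv_symm_apply] using hv
  have h1 := (Matrix.toEuclideanCLM (𝕜 := ℂ) (n := Fin n) M).le_opNorm x
  have h2 : Matrix.toEuclideanCLM (𝕜 := ℂ) (n := Fin n) M x = μ • x := by
    rw [hxdef, WithLp.equiv_symm_apply, Matrix.toEuclideanCLM_toLp, h]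
    rfl
  rw [h2, norm_smul] at h1
  have h3 : ‖Matrix.toEuclideanCLM (𝕜 := ℂ) (n := Fin n) M‖ = ‖M‖ :=
    (Matrix.cstar_norm_def M).symm
  rw [h3] at h1
  have := le_of_mul_le_mul_right h1 (lt_of_le_of_ne (norm_nonneg x) (Ne.symm hx))
  simpa using this

lemma exists_eigen {c : Mat} (hc : c ≠ 1) {m : ℕ} (hm : 0 < m) (hcm : c ^ m = 1) :
    ∃ (ζ : ℂ) (v : Fin n → ℂ), v ≠ 0 ∧ c *ᵥ v = ζ • v ∧ ζ ≠ 1 ∧ ζ ^ m = 1 := by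
  classical
  set T : Module.End ℂ (Fin n → ℂ) := Matrix.toLinAlgEquiv' c with hT
  have hT1 : T ≠ 1 := by
    intro h
    exact hc (by simpa using Matrix.toLinAlgEquiv'.injective (h.trans (map_one _).symm))
  have hTm : T ^ m = 1 := by
    rw [hT, ← map_pow, hcm, map_one]
  set Y := LinearMap.range (T - 1) with hY
  have hYne : Y ≠ ⊥ := by
    intro h
    exact hT1 (sub_eq_zero.mp (LinearMap.range_eq_bot.mp h))
  have : Nontrivial Y := Submodule.nontrivial_iff_ne_bot.mpr hYne
  have hmaps : ∀ y ∈ Y, T y ∈ Y := by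
    rintro y ⟨u, rfl⟩
    exact ⟨T u, by simp [LinearMap.sub_apply, map_sub]⟩
  set Tr := T.restrict hmaps with hTr
  obtain ⟨ζ, hζ⟩ := Module.End.exists_eigenvalue Tr
  obtain ⟨w, hw⟩ := hζ.exists_hasEigenvector
  have hweq : T (w : Fin n → ℂ) = ζ • (w : Fin n → ℂ) := by
    have := hw.apply_eq_smul
    calc T (w : Fin n → ℂ) = ((Tr w : Y) : Fin n → ℂ) := (LinearMap.restrict_coe_apply T hmaps w).symm
    _ = ζ • (w : Fin n → ℂ) := by rw [this]; rfl
  have hv0 : (w : Fin n → ℂ) ≠ 0 := by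
    simpa [Submodule.coe_eq_zero] using hw.2
  have hpowv : ∀ k : ℕ, (T ^ k) (w : Fin n → ℂ) = ζ ^ k • (w : Fin n → ℂ) := by
    intro k
    induction k with
    | zero => simp
    | succ k ih =>
      rw [pow_succ, Module.End.mul_apply, hweq, map_smul, ih, smul_smul, pow_succ']
  have hζm : ζ ^ m = 1 := by
    have := hpowv m
    rw [hTm] at this
    have h2 : (ζ ^ m - 1) • (w : Fin n → ℂ) = 0 := by
      rw [sub_smul, one_smul, ← this]; simp
    rcases smul_eq_zero.mp h2 with h | h
    · exact sub_eq_zero.mp h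
    · exact absurd h hv0
  have hζ1 : ζ ≠ 1 := by
    intro hζeq
    obtain ⟨u, hu⟩ := w.2
    have hTu : T u = u + (w : Fin n → ℂ) := by
      have : T u - u = (w : Fin n → ℂ) := by simpa [LinearMap.sub_apply] using hu
      rw [← this]; abel
    have hTw : T (w : Fin n → ℂ) = (w : Fin n → ℂ) := by rw [hweq, hζeq, one_smul]
    have hTkw : ∀ k : ℕ, (T ^ k) (w : Fin n → ℂ) = (w : Fin n → ℂ) := by
      intro k; rw [hpowv k, hζeq, one_pow, one_smul]
    have hTk : ∀ k : ℕ, (T ^ k) u = u + (k : ℂ) • (w : Fin n → ℂ) := by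
      intro k
      induction k with
      | zero => simp
      | succ k ih =>
        rw [pow_succ', Module.End.mul_apply, ih, map_add, hTu, map_smul, hTw]
        push_cast
        rw [add_smul, one_smul]
        abel
    have := hTk m
    rw [hTm] at this
    have h2 : (m : ℂ) • (w : Fin n → ℂ) = 0 := by
      have : u = u + (m : ℂ) • (w : Fin n → ℂ) := by simpa using this
      linear_combination (norm := abel) this.symm
    rcases smul_eq_zero.mp h2 with h | h
    · exact absurd (by exact_mod_cast h) hm.ne'
    · exact absurd h hv0
  exact ⟨ζ, w, hv0, by rw [← Matrix.toLinAlgEquiv'_apply, ← hT, hweq], hζ1, hζm⟩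

lemma exists_pow_far {c : Mat} (hc : c ≠ 1) {m : ℕ} (hm : 0 < m) (hcm : c ^ m = 1) :
    ∃ i : ℕ, Real.sqrt 3 ≤ ‖c ^ i - 1‖ := by
  obtain ⟨ζ, v, hv, heig, hζ1, hζm⟩ := exists_eigen hc hm hcm
  have habsm : ‖ζ‖ ^ m = 1 := by rw [← norm_pow, hζm, norm_one]
  have habs : ‖ζ‖ = 1 := by
    rcases lt_trichotomy ‖ζ‖ 1 with h | h | h
    · exact absurd habsm (by nlinarith [pow_lt_one₀ (norm_nonneg ζ) h hm.ne'])
    · exact h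
    · exact absurd habsm (by nlinarith [one_lt_pow₀ h hm.ne'])
  have harg : ζ = Complex.exp ((ζ.arg : ℂ) * Complex.I) := by
    conv_lhs => rw [← Complex.norm_mul_exp_arg_mul_I ζ]
    rw [habs]
    simp
  have hθ0 : ζ.arg ≠ 0 := by
    intro h
    rw [h] at harg
    simp at harg
    exact hζ1 harg
  have hθabs : 0 < |ζ.arg| := abs_pos.mpr hθ0
  have hθpi : |ζ.arg| ≤ Real.pi := Complex.abs_arg_le_pi ζ
  obtain ⟨i, hi1, hi2⟩ := theta_lemma hθabs hθpi
  have hcos : Real.cos (i * ζ.arg) ≤ -(1/2) := by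
    have : Real.cos (i * ζ.arg) = Real.cos (i * |ζ.arg|) := by
      rcases abs_cases ζ.arg with ⟨h, _⟩ | ⟨h, _⟩
      · rw [h]
      · rw [h, mul_neg, Real.cos_neg]
    rw [this]
    exact cos_le_neg_half hi1 hi2
  have hζi : ζ ^ i = Complex.exp (((i * ζ.arg : ℝ) : ℂ) * Complex.I) := by
    conv_lhs => rw [harg]
    rw [← Complex.exp_nat_mul]
    congr 1
    push_cast
    ring
  have hre : (ζ ^ i).re = Real.cos (i * ζ.arg) := by
    rw [hζi, Complex.exp_ofReal_mul_I_re]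
  have habsi : ‖ζ ^ i‖ = 1 := by rw [norm_pow, habs, one_pow]
  have hfar : Real.sqrt 3 ≤ ‖ζ ^ i - 1‖ :=
    abs_sub_one_ge habsi (by rw [hre]; exact hcos)
  have heigi : ∀ j : ℕ, (c ^ j) *ᵥ v = ζ ^ j • v := by
    intro j
    induction j with
    | zero => simp
    | succ k ih =>
      rw [pow_succ, pow_succ, ← Matrix.mulVec_mulVec, heig, Matrix.mulVec_smul, ih, smul_smul,
        mul_comm]
  have heigsub : (c ^ i - 1) *ᵥ v = (ζ ^ i - 1) • v := by
    rw [Matrix.sub_mulVec, Matrix.one_mulVec, heigi i, sub_smul, one_smul]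
  exact ⟨i, hfar.trans (eigen_norm_le hv heigsub)⟩



lemma commutator_norm_mat {A B A' B' : Mat} (hA : A' * A = 1) (hB : B' * B = 1)
    (hBA : B * A ∈ unitary Mat) :
    ‖A * B * A' * B' - 1‖ ≤ 2 * ‖A - 1‖ * ‖B - 1‖ := by
  have e1 : (A * B * A' * B') * (B * A) = A * B := by
    calc (A * B * A' * B') * (B * A)
        = A * B * A' * ((B' * B) * A) := by noncomm_ring
      _ = A * B * (A' * A) := by rw [hB]; noncomm_ring
      _ = A * B := by rw [hA, mul_one]
  have key : (A * B * A' * B' - 1) * (B * A) = (A - 1) * (B - 1) - (B - 1) * (A - 1) := by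
    have h2 : (A * B * A' * B' - 1) * (B * A) = (A * B * A' * B') * (B * A) - B * A := by
      noncomm_ring
    rw [h2, e1]
    noncomm_ring
  calc ‖A * B * A' * B' - 1‖
      = ‖(A * B * A' * B' - 1) * (B * A)‖ := (CStarRing.norm_mul_mem_unitary _ hBA).symm
    _ = ‖(A - 1) * (B - 1) - (B - 1) * (A - 1)‖ := by rw [key]
    _ ≤ ‖(A - 1) * (B - 1)‖ + ‖(B - 1) * (A - 1)‖ := norm_sub_le _ _
    _ ≤ ‖A - 1‖ * ‖B - 1‖ + ‖B - 1‖ * ‖A - 1‖ := by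
        gcongr <;> exact norm_mul_le _ _
    _ = 2 * ‖A - 1‖ * ‖B - 1‖ := by ring

section WithGroup

variable (F : Subgroup (Matrix.GeneralLinearGroup (Fin n) ℂ))

/-- The natural monoid hom from a subgroup of `GL` to the matrix ring. -/
noncomputable def qh : F →* Mat := (Units.coeHom Mat).comp F.subtype

lemma qh_inj : Function.Injective (qh F) :=
  Units.val_injective.comp Subtype.val_injective

variable {F}

lemma commutator_norm' (hU : ∀ g : F, qh F g ∈ unitary Mat) (a b : F) :
    ‖qh F ⁅a, b⁆ - 1‖ ≤ 2 * ‖qh F a - 1‖ * ‖qh F b - 1‖ := by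
  have h1 : qh F ⁅a, b⁆ = qh F a * qh F b * (↑((↑a : Matˣ)⁻¹) : Mat) * (↑((↑b : Matˣ)⁻¹) : Mat) :=
    rfl
  rw [h1]
  exact commutator_norm_mat (Units.inv_mul _) (Units.inv_mul _)
    (mul_mem (hU b) (hU a))

lemma commute_of_close [Finite F] (hU : ∀ g : F, qh F g ∈ unitary Mat) :
    ∀ a b : F, ‖qh F a - 1‖ < 2/5 → ‖qh F b - 1‖ < 2/5 → a * b = b * a := by
  classical
  have : Fintype F := Fintype.ofFinite F
  by_contra hcon
  push_neg at hcon
  obtain ⟨a₀, b₀, ha₀, hb₀, hab₀⟩ := hcon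
  set S : Finset (F × F) := Finset.univ.filter
    (fun p => ‖qh F p.1 - 1‖ < 2/5 ∧ ‖qh F p.2 - 1‖ < 2/5 ∧ p.1 * p.2 ≠ p.2 * p.1) with hS
  have hSne : S.Nonempty := ⟨(a₀, b₀), by simp [hS, ha₀, hb₀, hab₀]⟩
  obtain ⟨p, hpS, hpmin⟩ := S.exists_min_image (fun p => ‖qh F p.2 - 1‖) hSne
  obtain ⟨ha, hb, hab⟩ := (Finset.mem_filter.mp hpS).2
  set a := p.1
  set b := p.2
  have hbpos : 0 < ‖qh F b - 1‖ := by
    rcases eq_or_lt_of_le (norm_nonneg (qh F b - 1)) with h | h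
    · exfalso
      have h1 : qh F b = 1 := by
        have := norm_eq_zero.mp h.symm
        rwa [sub_eq_zero] at this
      have hb1 : b = 1 := qh_inj F (by rw [h1, map_one])
      exact hab (by rw [hb1, mul_one, one_mul])
    · exact h
  set c := ⁅a, b⁆ with hc
  have hcnorm : ‖qh F c - 1‖ ≤ 2 * ‖qh F a - 1‖ * ‖qh F b - 1‖ := commutator_norm' hU a b
  have hclt : ‖qh F c - 1‖ < ‖qh F b - 1‖ := by nlinarith [norm_nonneg (qh F a - 1)]
  have hc25 : ‖qh F c - 1‖ < 2/5 := hclt.trans hb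
  have hbc : Commute c b := by
    by_contra hbc
    have hmem : (b, c) ∈ S := Finset.mem_filter.mpr ⟨Finset.mem_univ _,
      hb, hc25, fun h => hbc h.symm⟩
    exact absurd (hpmin _ hmem) (not_le.mpr hclt)
  have hc1 : c ≠ 1 := fun h => hab (commutatorElement_eq_one_iff_mul_comm.mp h)
  set m := orderOf b with hm
  have hmpos : 0 < m := orderOf_pos b
  have hbm : b ^ m = 1 := pow_orderOf_eq_one b
  have key : ∀ k : ℕ, a * b ^ k * a⁻¹ = c ^ k * b ^ k := by
    intro k
    induction k with
    | zero => simp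
    | succ k ih =>
      have h1 : a * b ^ (k+1) * a⁻¹ = (a * b ^ k * a⁻¹) * (a * b * a⁻¹) := by group
      have h2 : a * b * a⁻¹ = c * b := by rw [hc]; group
      rw [h1, ih, h2]
      have h3 : b ^ k * c = c * b ^ k := (hbc.symm.pow_left k).eq
      calc c ^ k * b ^ k * (c * b) = c ^ k * (b ^ k * c) * b := by noncomm_ring
        _ = c ^ k * (c * b ^ k) * b := by rw [h3]
        _ = c ^ (k+1) * b ^ (k+1) := by rw [pow_succ, pow_succ]; noncomm_ring
  have hcm : c ^ m = 1 := by
    have h4 := key m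
    rw [hbm, mul_one, mul_one] at h4
    rw [← h4, mul_inv_cancel]
  have hqc1 : qh F c ≠ 1 := fun h => hc1 (qh_inj F (by rw [h, map_one]))
  have hqcm : (qh F c) ^ m = 1 := by rw [← map_pow, hcm, map_one]
  obtain ⟨i, hfar⟩ := exists_pow_far hqc1 hmpos hqcm
  have hci : c ^ i = ⁅a, b ^ i⁆ := by
    rw [commutatorElement_def, key i]
    group
  have hest : ‖qh F (c ^ i) - 1‖ ≤ 2 * ‖qh F a - 1‖ * ‖qh F (b ^ i) - 1‖ := by
    rw [hci]
    exact commutator_norm' hU a (b ^ i)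
  rw [map_pow] at hest
  have hb2 : ‖qh F (b ^ i) - 1‖ ≤ 2 := norm_unitary_sub_one_le (hU (b ^ i))
  have hlt : Real.sqrt 3 ≤ 8/5 := by
    calc Real.sqrt 3 ≤ ‖(qh F c) ^ i - 1‖ := hfar
    _ ≤ 2 * ‖qh F a - 1‖ * ‖qh F (b ^ i) - 1‖ := hest
    _ ≤ 2 * (2/5) * 2 := by
        have h5 : (0:ℝ) ≤ ‖qh F a - 1‖ := norm_nonneg _
        nlinarith [norm_nonneg (qh F (b ^ i) - 1)]
    _ = 8/5 := by norm_num
  have h35 : (8:ℝ)/5 < Real.sqrt 3 := by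
    nlinarith [Real.sq_sqrt (show (0:ℝ) ≤ 3 by norm_num), Real.sqrt_nonneg 3]
  linarith

end WithGroup


lemma mem_unitary_of_star_mul_self {w : Matˣ} (h : star (↑w : Mat) * (↑w : Mat) = 1) :
    (↑w : Mat) ∈ unitary Mat := by
  rw [Unitary.mem_iff]
  refine ⟨h, ?_⟩
  have hsw : star (↑w : Mat) = ↑w⁻¹ := by
    calc star (↑w : Mat) = star ↑w * (↑w * ↑w⁻¹) := by rw [w.mul_inv, mul_one]
    _ = (star ↑w * ↑w) * ↑w⁻¹ := by rw [mul_assoc]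
    _ = ↑w⁻¹ := by rw [h, one_mul]
  rw [hsw, w.mul_inv]

lemma exists_conj_unitary (F : Subgroup (Matrix.GeneralLinearGroup (Fin n) ℂ)) [Finite F] :
    ∃ p : Matrix.GeneralLinearGroup (Fin n) ℂ,
      ∀ g ∈ F, ((p * g * p⁻¹ : Matrix.GeneralLinearGroup (Fin n) ℂ) : Mat) ∈ unitary Mat := by
  classical
  have : Fintype F := Fintype.ofFinite F
  set H : Mat := ∑ g : F, (qh F g)ᴴ * qh F g with hH
  have hinv : ∀ g : F, (qh F g)ᴴ * H * qh F g = H := by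
    intro g
    calc (qh F g)ᴴ * H * qh F g = ∑ h : F, (qh F (h * g))ᴴ * qh F (h * g) := by
          rw [hH, Finset.mul_sum, Finset.sum_mul]
          refine Finset.sum_congr rfl fun h _ => ?_
          rw [_root_.map_mul, Matrix.conjTranspose_mul]
          noncomm_ring
      _ = H := by
          rw [hH]
          exact Fintype.sum_equiv (Equiv.mulRight g) _ _ (fun h => rfl)
  have hHpos : H.PosDef := by
    have h1 : H = (qh F 1)ᴴ * qh F 1
        + ∑ g ∈ Finset.univ.erase (1 : F), (qh F g)ᴴ * qh F g := by
      rw [hH]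
      exact (Finset.add_sum_erase _ _ (Finset.mem_univ (1 : F))).symm
    rw [h1]
    refine Matrix.PosDef.add_posSemidef ?_ ?_
    · have : qh F (1 : F) = (1 : Mat) := map_one _
      rw [this]
      simpa using Matrix.PosDef.one (n := Fin n) (R := ℂ)
    · refine Finset.sum_induction _ _ (fun a b ha hb => ha.add hb) Matrix.PosSemidef.zero
        (fun g _ => Matrix.posSemidef_conjTranspose_mul_self _)
  set P : Mat := CFC.sqrt H with hPdef
  have hPH : P * P = H := CFC.sqrt_mul_sqrt_self H hHpos.posSemidef.nonneg
  have hPherm : Pᴴ = P := (Matrix.nonneg_iff_posSemidef.mp (CFC.sqrt_nonneg H)).1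
  have hPunit : IsUnit P := by
    rw [Matrix.isUnit_iff_isUnit_det]
    have hdet : P.det * P.det = H.det := by rw [← Matrix.det_mul, hPH]
    have hH0 : H.det ≠ 0 := ne_of_gt hHpos.det_pos
    rw [isUnit_iff_ne_zero]
    intro h0
    rw [h0, mul_zero] at hdet
    exact hH0 hdet.symm
  obtain ⟨pu, hpu⟩ := hPunit
  refine ⟨pu, ?_⟩
  intro g hg
  set Pi : Mat := ↑pu⁻¹ with hPi
  have hPPi : P * Pi = 1 := by rw [← hpu]; exact pu.mul_inv
  have hPiP : Pi * P = 1 := by rw [← hpu]; exact pu.inv_mul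
  have hPiherm : Piᴴ = Pi := by
    have h1 : P * Piᴴ = 1 := by
      rw [← hPherm, ← Matrix.conjTranspose_mul, hPiP, Matrix.conjTranspose_one]
    calc Piᴴ = (Pi * P) * Piᴴ := by rw [hPiP, one_mul]
      _ = Pi * (P * Piᴴ) := by rw [mul_assoc]
      _ = Pi := by rw [h1, mul_one]
  have hval : ((pu * g * pu⁻¹ : Matrix.GeneralLinearGroup (Fin n) ℂ) : Mat)
      = P * (↑g : Mat) * Pi := by
    rw [Units.val_mul, Units.val_mul, hpu, hPi]
  have hginv : ((↑g : Mat))ᴴ * H * (↑g : Mat) = H := hinv ⟨g, hg⟩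
  apply mem_unitary_of_star_mul_self
  rw [hval]
  have hstar : star (P * (↑g : Mat) * Pi) = Pi * ((↑g : Mat))ᴴ * P := by
    rw [Matrix.star_eq_conjTranspose, Matrix.conjTranspose_mul, Matrix.conjTranspose_mul,
      hPiherm, hPherm]
    noncomm_ring
  rw [hstar]
  calc Pi * ((↑g : Mat))ᴴ * P * (P * (↑g : Mat) * Pi)
      = Pi * (((↑g : Mat))ᴴ * (P * P) * (↑g : Mat)) * Pi := by noncomm_ring
    _ = Pi * H * Pi := by rw [hPH, hginv]
    _ = Pi * (P * P) * Pi := by rw [hPH]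
    _ = (Pi * P) * (P * Pi) := by noncomm_ring
    _ = 1 := by rw [hPiP, hPPi, one_mul]



lemma exists_net (n : ℕ) : ∃ T : Finset (Matrix (Fin n) (Fin n) ℂ),
    (unitary (Matrix (Fin n) (Fin n) ℂ) : Set (Matrix (Fin n) (Fin n) ℂ)) ⊆
      ⋃ t ∈ T, Metric.ball t (1/5) := by
  classical
  have h1 : (unitary (Matrix (Fin n) (Fin n) ℂ) : Set (Matrix (Fin n) (Fin n) ℂ)) =
      {x : Matrix (Fin n) (Fin n) ℂ | star x * x = 1} ∩
      {x : Matrix (Fin n) (Fin n) ℂ | x * star x = 1} := by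
    ext x
    simp only [Set.mem_inter_iff, Set.mem_setOf_eq, SetLike.mem_coe]
    exact Unitary.mem_iff
  have hclosed : IsClosed (unitary (Matrix (Fin n) (Fin n) ℂ) :
      Set (Matrix (Fin n) (Fin n) ℂ)) := by
    rw [h1]
    exact (isClosed_eq (continuous_star.mul continuous_id) continuous_const).inter
      (isClosed_eq (continuous_id.mul continuous_star) continuous_const)
  have hbdd : Bornology.IsBounded (unitary (Matrix (Fin n) (Fin n) ℂ) :
      Set (Matrix (Fin n) (Fin n) ℂ)) := by
    apply Bornology.IsBounded.subset (Metric.isBounded_closedBall (x := (0 : Matrix (Fin n) (Fin n) ℂ)) (r := 1))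
    intro x hx
    rw [Metric.mem_closedBall, dist_zero_right]
    exact norm_unitary_le hx
  have hcompact := Metric.isCompact_of_isClosed_isBounded hclosed hbdd
  obtain ⟨t, htfin, htsub⟩ := (Metric.totallyBounded_iff.mp hcompact.totallyBounded)
    (1/5) (by norm_num)
  exact ⟨htfin.toFinset, by simpa using htsub⟩

lemma unitary_core (F : Subgroup (Matrix.GeneralLinearGroup (Fin n) ℂ)) [Finite F]
    (hU : ∀ g : F, qh F g ∈ unitary Mat) (T : Finset Mat)
    (hT : (unitary Mat : Set Mat) ⊆ ⋃ t ∈ T, Metric.ball t (1/5)) :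
    ∃ A : Subgroup F, A.Normal ∧ (∀ a b : A, a * b = b * a) ∧ A.index ≤ T.card := by
  classical
  set Sset : Set F := {g | ‖qh F g - 1‖ < 2/5} with hSset
  set A : Subgroup F := Subgroup.closure Sset with hA
  have hconj : ∀ (g : F), ∀ y ∈ Sset, g * y * g⁻¹ ∈ Sset := by
    intro g y hy
    have h1 : qh F (g * y * g⁻¹) - 1 = qh F g * (qh F y - 1) * qh F g⁻¹ := by
      have hgg : qh F g * qh F g⁻¹ = 1 := by rw [← map_mul, mul_inv_cancel, map_one]
      rw [map_mul, map_mul]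
      rw [mul_sub, sub_mul, mul_one]
      rw [hgg]
    have h2 : ‖qh F (g * y * g⁻¹) - 1‖ = ‖qh F y - 1‖ := by
      rw [h1, CStarRing.norm_mul_mem_unitary _ (hU g⁻¹), CStarRing.norm_mem_unitary_mul _ (hU g)]
    show ‖qh F (g * y * g⁻¹) - 1‖ < 2/5
    rw [h2]
    exact hy
  refine ⟨A, ?_, ?_, ?_⟩
  · constructor
    have hgen : ∀ x : F, x ∈ Subgroup.closure Sset →
        ∀ g : F, g * x * g⁻¹ ∈ Subgroup.closure Sset := by
      intro x hx
      induction hx using Subgroup.closure_induction with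
      | mem y hy => exact fun g => Subgroup.subset_closure (hconj g y hy)
      | one => intro g; simpa using Subgroup.one_mem _
      | mul y z hy hz hy' hz' =>
        intro g
        have : g * (y * z) * g⁻¹ = (g * y * g⁻¹) * (g * z * g⁻¹) := by group
        rw [this]
        exact Subgroup.mul_mem _ (hy' g) (hz' g)
      | inv y hy hy' =>
        intro g
        have : g * y⁻¹ * g⁻¹ = (g * y * g⁻¹)⁻¹ := by group
        rw [this]
        exact Subgroup.inv_mem _ (hy' g)
    exact fun x hx g => hgen x hx g
  · have hcomm : ∀ x y : F, x ∈ Subgroup.closure Sset → y ∈ Subgroup.closure Sset →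
        x * y = y * x := by
      intro x y hx hy
      induction hx, hy using Subgroup.closure_induction₂ with
      | mem x y hx hy => exact commute_of_close hU x y hx hy
      | one_left x hx => rw [one_mul, mul_one]
      | one_right x hx => rw [one_mul, mul_one]
      | mul_left x y z hx hy hz h1 h2 =>
        rw [mul_assoc, h2, ← mul_assoc, h1, mul_assoc]
      | mul_right y z x hy hz hx h1 h2 =>
        rw [← mul_assoc, h1, mul_assoc, h2, ← mul_assoc]
      | inv_left x y hx hy h1 =>
        exact (Commute.inv_left h1).eq
      | inv_right x y hx hy h1 =>
        exact (Commute.inv_right h1).eq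
    intro a b
    exact Subtype.ext (hcomm a b a.2 b.2)
  · -- index bound
    have hout : ∀ q : F ⧸ A, ∃ t ∈ T, Quotient.out q ∈ {x : F | qh F x ∈ Metric.ball t (1/5)} := by
      intro q
      have := hT (hU (Quotient.out q))
      simpa using this
    choose ft hftT hft using hout
    have hinj : Function.Injective (fun q : F ⧸ A => (⟨ft q, hftT q⟩ : {t // t ∈ T})) := by
      intro q1 q2 heq
      simp only [Subtype.mk_eq_mk] at heq
      set x1 := Quotient.out q1
      set x2 := Quotient.out q2
      have h1 := hft q1
      have h2 := hft q2
      rw [heq] at h1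
      have hd : dist (qh F x1) (qh F x2) < 2/5 := by
        calc dist (qh F x1) (qh F x2) ≤ dist (qh F x1) (ft q2) + dist (ft q2) (qh F x2) :=
          dist_triangle _ _ _
        _ < 1/5 + 1/5 := by
            apply add_lt_add h1
            rw [dist_comm]
            exact h2
        _ = 2/5 := by norm_num
      have hnorm : ‖qh F (x2⁻¹ * x1) - 1‖ < 2/5 := by
        have he : qh F (x2⁻¹ * x1) - 1 = qh F x2⁻¹ * (qh F x1 - qh F x2) := by
          have h9 : qh F x2⁻¹ * qh F x2 = 1 := by rw [← map_mul, inv_mul_cancel, map_one]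
          rw [map_mul, mul_sub, h9]
        rw [he, CStarRing.norm_mem_unitary_mul _ (hU x2⁻¹), ← dist_eq_norm]
        exact hd
      have hmem : x2⁻¹ * x1 ∈ A := Subgroup.subset_closure hnorm
      have : (QuotientGroup.mk x2 : F ⧸ A) = QuotientGroup.mk x1 := by
        rw [QuotientGroup.eq]
        exact hmem
      rw [QuotientGroup.out_eq', QuotientGroup.out_eq'] at this
      exact this.symm
    calc A.index = Nat.card (F ⧸ A) := rfl
    _ ≤ Nat.card {t // t ∈ T} := Nat.card_le_card_of_injective _ hinj
    _ = T.card := by simp [Nat.card_eq_finsetCard]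

end JordanProof

/-- Jordan's theorem: for each `n` there is a constant `f n` such that every finite subgroup of
`GL(n,ℂ)` has a normal abelian subgroup of index at most `f n`. -/
theorem stmt_8 :
    ∃ f : ℕ → ℕ, ∀ n : ℕ, ∀ F : Subgroup (Matrix.GeneralLinearGroup (Fin n) ℂ), Finite F →
      ∃ A : Subgroup F, A.Normal ∧ (∀ a b : A, a * b = b * a) ∧ A.index ≤ f n := by
  have main : ∀ n : ℕ, ∃ N : ℕ, ∀ F : Subgroup (Matrix.GeneralLinearGroup (Fin n) ℂ),
      Finite F → ∃ A : Subgroup F, A.Normal ∧ (∀ a b : A, a * b = b * a) ∧ A.index ≤ N := by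
    intro n
    obtain ⟨T, hT⟩ := JordanProof.exists_net n
    refine ⟨T.card, ?_⟩
    intro F hFin
    obtain ⟨p, hp⟩ := JordanProof.exists_conj_unitary F
    set e : Matrix.GeneralLinearGroup (Fin n) ℂ ≃* Matrix.GeneralLinearGroup (Fin n) ℂ :=
      MulAut.conj p with he
    set F' : Subgroup (Matrix.GeneralLinearGroup (Fin n) ℂ) :=
      F.map (e : Matrix.GeneralLinearGroup (Fin n) ℂ →* Matrix.GeneralLinearGroup (Fin n) ℂ)
      with hF'
    set φ : F ≃* F' := e.subgroupMap F with hφ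
    have : Finite F' := Finite.of_equiv F φ.toEquiv
    have hU : ∀ g : F', JordanProof.qh F' g ∈ unitary (Matrix (Fin n) (Fin n) ℂ) := by
      rintro ⟨g, hg⟩
      obtain ⟨x, hx, rfl⟩ := hg
      exact hp x hx
    obtain ⟨A', hN, hC, hI⟩ := JordanProof.unitary_core F' hU T hT
    set A : Subgroup F := A'.comap φ.toMonoidHom with hA
    refine ⟨A, hN.comap _, ?_, ?_⟩
    · intro a b
      apply Subtype.ext
      have ha' : φ (a : F) ∈ A' := Subgroup.mem_comap.mp a.2
      have hb' : φ (b : F) ∈ A' := Subgroup.mem_comap.mp b.2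
      have h1 : φ (a : F) * φ (b : F) = φ (b : F) * φ (a : F) := by
        have := hC ⟨φ (a : F), ha'⟩ ⟨φ (b : F), hb'⟩
        exact Subtype.ext_iff.mp this
      have h2 : φ ((a : F) * (b : F)) = φ ((b : F) * (a : F)) := by
        rw [map_mul, map_mul, h1]
      exact φ.injective h2
    · calc A.index = A'.index := Subgroup.index_comap_of_surjective _ φ.surjective
      _ ≤ T.card := hI
  choose f hf using main
  exact ⟨f, fun n F hF => hf n F hF⟩
end
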